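/- Let p and q be odd prime numbers. Then there is no pair (w, z) ∈ ℚ₂ × ℚ₂ satisfying 2w² + 4 = pq·z⁴. -/

import Mathlib

private lemma val_pow (x : ℚ_[2]) (hx : x ≠ 0) (n : ℕ) :
    (x ^ n).valuation = n * x.valuation := by
  induction n with
  | zero => simp [Padic.valuation_one]
  | succ k ih =>
    rw [pow_succ, Padic.valuation_mul (pow_ne_zero k hx) hx, ih]
    push_cast; ring

private lemma val_add_of_lt {x y : ℚ_[2]} (hx : x ≠ 0) (hy : y ≠ 0)
    (h : x.valuation < y.valuation) : (x + y).valuation = x.valuation := by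
  have h2 : (1 : ℝ) < 2 := one_lt_two
  have hnorm : ‖y‖ < ‖x‖ := by
    rw [Padic.norm_eq_zpow_neg_valuation hx, Padic.norm_eq_zpow_neg_valuation hy]
    push_cast
    exact zpow_lt_zpow_right₀ h2 (by omega)
  have hmax : ‖x + y‖ = ‖x‖ := by
    rw [Padic.add_eq_max_of_ne (ne_of_gt hnorm)]
    exact max_eq_left hnorm.le
  have hxy : x + y ≠ 0 := by
    intro h0
    rw [h0, norm_zero] at hmax
    exact hx (norm_eq_zero.mp hmax.symm)
  have := (Padic.norm_eq_zpow_neg_valuation hxy).symm.trans (hmax.trans (Padic.norm_eq_zpow_neg_valuation hx))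
  push_cast at this
  have := zpow_right_injective₀ (by norm_num : (0:ℝ) < 2) (by norm_num) this
  omega

/-- For odd primes `p, q`, the equation `2w² + 4 = pq·z⁴` has no solution
`(w, z) ∈ ℚ₂ × ℚ₂`. -/
theorem stmt5 (p q : ℕ) (hp : p.Prime) (hq : q.Prime) (hp2 : p ≠ 2) (hq2 : q ≠ 2) :
    ¬∃ w z : ℚ_[2], 2 * w ^ 2 + 4 = (p : ℚ_[2]) * (q : ℚ_[2]) * z ^ 4 := by
  rintro ⟨w, z, h⟩
  have h2 : (2 : ℚ_[2]) ≠ 0 := two_ne_zero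
  have h4 : (4 : ℚ_[2]) ≠ 0 := by norm_num
  have hv2 : (2 : ℚ_[2]).valuation = 1 := by
    have h := Padic.valuation_p (p := 2)
    exact_mod_cast h
  have hv4 : (4 : ℚ_[2]).valuation = 2 := by
    have : (4 : ℚ_[2]) = 2 * 2 := by norm_num
    rw [this, Padic.valuation_mul h2 h2, hv2]; norm_num
  have hp0 : (p : ℚ_[2]) ≠ 0 := Nat.cast_ne_zero.mpr hp.pos.ne'
  have hq0 : (q : ℚ_[2]) ≠ 0 := Nat.cast_ne_zero.mpr hq.pos.ne'
  have hpd : ¬ (2 ∣ p) := fun hd => hp2 ((Nat.prime_dvd_prime_iff_eq Nat.prime_two hp).mp hd).symm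
  have hqd : ¬ (2 ∣ q) := fun hd => hq2 ((Nat.prime_dvd_prime_iff_eq Nat.prime_two hq).mp hd).symm
  have hvp : (p : ℚ_[2]).valuation = 0 := by
    rw [Padic.valuation_natCast, padicValNat.eq_zero_of_not_dvd hpd]; rfl
  have hvq : (q : ℚ_[2]).valuation = 0 := by
    rw [Padic.valuation_natCast, padicValNat.eq_zero_of_not_dvd hqd]; rfl
  by_cases hz : z = 0
  · -- then 2w² + 4 = 0, i.e. 2w² = -4
    rw [hz] at h
    simp only [ne_eq, OfNat.ofNat_ne_zero, not_false_eq_true, zero_pow, mul_zero] at h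
    have hw : w ≠ 0 := by
      intro hw0; rw [hw0] at h; norm_num at h
    have heq : 2 * w ^ 2 = (-4 : ℤ) := by push_cast; linear_combination h
    have hv : (2 * w ^ 2).valuation = 1 + 2 * w.valuation := by
      rw [Padic.valuation_mul h2 (pow_ne_zero 2 hw), hv2, val_pow w hw 2]
      push_cast; ring
    have hvneg : ((-4 : ℤ) : ℚ_[2]).valuation = 2 := by
      rw [Padic.valuation_intCast]
      have : padicValInt 2 (-4) = padicValNat 2 4 := by
        rw [padicValInt]; norm_num
      rw [this]
      have : padicValNat 2 4 = 2 := by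
        have : (4 : ℕ) = 2 ^ 2 := by norm_num
        rw [this, padicValNat.prime_pow]
      rw [this]; rfl
    rw [heq, hvneg] at hv
    omega
  · -- z ≠ 0
    have hvrhs : ((p : ℚ_[2]) * (q : ℚ_[2]) * z ^ 4).valuation = 4 * z.valuation := by
      rw [Padic.valuation_mul (mul_ne_zero hp0 hq0) (pow_ne_zero 4 hz),
        Padic.valuation_mul hp0 hq0, hvp, hvq, val_pow z hz 4]
      push_cast; ring
    by_cases hw : w = 0
    · rw [hw] at h
      simp only [ne_eq, OfNat.ofNat_ne_zero, not_false_eq_true, zero_pow, mul_zero,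
        zero_add] at h
      have := hvrhs
      rw [← h, hv4] at this
      omega
    · have hA : (2 : ℚ_[2]) * w ^ 2 ≠ 0 := mul_ne_zero h2 (pow_ne_zero 2 hw)
      have hvA : ((2 : ℚ_[2]) * w ^ 2).valuation = 1 + 2 * w.valuation := by
        rw [Padic.valuation_mul h2 (pow_ne_zero 2 hw), hv2, val_pow w hw 2]
        push_cast; ring
      rcases lt_trichotomy ((2 : ℚ_[2]) * w ^ 2).valuation ((4 : ℚ_[2]).valuation) with hlt | heq | hgt
      · have hval := val_add_of_lt hA h4 hlt
        rw [h, hvrhs] at hval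
        rw [hvA] at hval
        omega
      · rw [hvA, hv4] at heq; omega
      · have hval := val_add_of_lt h4 hA hgt
        rw [add_comm] at hval
        rw [h, hvrhs] at hval
        rw [hv4] at hval
        omega
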